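/- Let M be a group having at least one infinite cyclic subgroup (i.e., an element of infinite order). Then there exists an extended finite automaton A over M such that L(A) is not regular and gmc_A(n) ∈ O(√n). -/

import Mathlib

open scoped Classical

/-- An extended finite automaton (EFA) over a group `M`, with input alphabet `V`:
a finite automaton whose transitions additionally multiply a group register by elements
of `M`. -/
structure EFA (V M : Type) [Group M] where
  /-- States. -/
  Q : Type
  [fQ : Fintype Q]
  /-- Transition function: finitely many (state, group element) pairs per state and letter. -/
  δ : Q → V → Set (Q × M)
  fin : ∀ q a, (δ q a).Finite
  /-- Initial state. -/
  q₀ : Q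
  /-- Final states. -/
  F : Set Q

variable {V M : Type} [Group M]

/-- `A.Steps c c' k` : the EFA `A` goes from configuration `c` (state, remaining input,
register) to configuration `c'` using exactly `k` transitions whose group element is not the
identity. -/
inductive EFA.Steps (A : EFA V M) :
    A.Q × List V × M → A.Q × List V × M → ℕ → Prop
  | refl (c : A.Q × List V × M) : Steps A c c 0
  | step {s : A.Q} {r : M} {q : A.Q} {w : List V} {m : M} {c : A.Q × List V × M} {k : ℕ}
      {a : V} (h : (s, r) ∈ A.δ q a) (ih : Steps A (s, w, m * r) c k) :
      Steps A (q, a :: w, m) c (if r = 1 then k else k + 1)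

/-- The word `w` is accepted using exactly `k` non-identity group elements: starting from the
initial state with register `1`, the whole input is read and a final state is reached with
register `1`. -/
def EFA.AcceptsN (A : EFA V M) (w : List V) (k : ℕ) : Prop :=
  ∃ q ∈ A.F, A.Steps (A.q₀, w, 1) (q, [], 1) k

/-- The language accepted by an EFA. -/
def EFA.language (A : EFA V M) : Language V := {w | ∃ k, A.AcceptsN w k}

/-- Group memory complexity of a word: the minimal number of non-identity group elements used
over all accepting computations (`0` if the word is not accepted). -/
noncomputable def EFA.gmcW (A : EFA V M) (w : List V) : ℕ :=
  sInf {k | A.AcceptsN w k}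

/-- Group memory complexity of the EFA: maximum over words of length `n`. -/
noncomputable def EFA.gmcFun (A : EFA V M) (n : ℕ) : ℕ :=
  sSup {m | ∃ w : List V, w.length = n ∧ A.gmcW w = m}

/-- `f ∈ O(h)` for `ℕ`-valued functions. -/
def InO (f h : ℕ → ℕ) : Prop := ∃ c : ℕ, ∀ n, f n ≤ c * h n + c

/-- `f ∈ Ω(n)`: there is a rational constant `1/c > 0` with `f n ≥ n/c` for infinitely many `n`. -/
def InOmegaLinear (f : ℕ → ℕ) : Prop := ∃ c : ℕ, 0 < c ∧ ∀ m : ℕ, ∃ n ≥ m, n ≤ c * f n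


namespace EfaSqrt

inductive St | q0 | all | t1 | t2 | sk | pE | u1 | u2 | u3 | v1 | v2
  deriving DecidableEq

instance : Fintype St where
  elems := {St.q0, St.all, St.t1, St.t2, St.sk, St.pE, St.u1, St.u2, St.u3, St.v1, St.v2}
  complete := by intro x; cases x <;> simp

abbrev repA (n : ℕ) : List Bool := List.replicate n false

def blk : ℕ → ℕ → List Bool
  | _, 0 => []
  | j, c+1 => repA j ++ true :: blk (j+1) c

def Sl : Set (List Bool) := {w | ∃ k, w = true :: blk 1 k}

/-- ends with `true` (or empty) -/
def EndB (v : List Bool) : Prop := v = [] ∨ ∃ u, v = u ++ [true]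

theorem lastcat {u u' : List Bool} {x y : Bool} (h : u ++ [x] = u' ++ [y]) : x = y := by
  have := congrArg List.getLast? h
  simpa using this

theorem repEq : ∀ (p j : ℕ) (X Y : List Bool),
    repA p ++ true :: X = repA j ++ true :: Y → p = j ∧ X = Y := by
  intro p
  induction p with
  | zero =>
    intro j X Y h
    cases j with
    | zero => simpa using h
    | succ j => simp [repA, List.replicate_succ] at h
  | succ p ih =>
    intro j X Y h
    cases j with
    | zero => simp [repA, List.replicate_succ] at h
    | succ j =>
      simp only [repA, List.replicate_succ, List.cons_append, List.cons.injEq] at h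
      obtain ⟨pj, XY⟩ := ih j X Y h.2
      exact ⟨by omega, XY⟩

theorem lead0 : ∀ (d j : ℕ) (X w' : List Bool),
    repA j ++ true :: X = repA d ++ w' → d ≤ j := by
  intro d
  induction d with
  | zero => intro j X w' _; omega
  | succ d ih =>
    intro j X w' h
    cases j with
    | zero => simp [repA, List.replicate_succ] at h
    | succ j =>
      simp only [repA, List.replicate_succ, List.cons_append, List.cons.injEq] at h
      have := ih j X w' h.2
      omega

theorem splitB : ∀ (j : ℕ) (u w' X : List Bool),
    u ++ true :: w' = repA j ++ true :: X →
    (u = repA j ∧ w' = X) ∨ ∃ u₂, u = repA j ++ true :: u₂ ∧ X = u₂ ++ true :: w' := by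
  intro j
  induction j with
  | zero =>
    intro u w' X h
    cases u with
    | nil => left; simpa using h
    | cons b u₂ =>
      simp only [repA, List.replicate_zero, List.nil_append, List.cons_append,
        List.cons.injEq] at h
      right; exact ⟨u₂, by simp [repA, h.1], h.2.symm⟩
  | succ j ih =>
    intro u w' X h
    cases u with
    | nil => simp [repA, List.replicate_succ] at h
    | cons b u₂ =>
      simp only [repA, List.replicate_succ, List.cons_append, List.cons.injEq] at h
      rcases ih u₂ w' X h.2 with ⟨h1, h2⟩ | ⟨u₃, h1, h2⟩
      · left; exact ⟨by simp [repA, List.replicate_succ, h.1, h1], h2⟩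
      · right; exact ⟨u₃, by simp [repA, List.replicate_succ, h.1, h1], h2⟩

theorem blkDecomp : ∀ (c j p : ℕ) (w' : List Bool),
    blk j c = repA p ++ true :: w' → p = j ∧ ∃ c', c = c' + 1 ∧ w' = blk (j+1) c' := by
  intro c j p w' h
  cases c with
  | zero =>
    exfalso
    have : ([] : List Bool) = repA p ++ true :: w' := h
    have := congrArg List.length this
    simp at this
  | succ c =>
    have h' : repA j ++ true :: blk (j+1) c = repA p ++ true :: w' := h
    obtain ⟨hpj, hw⟩ := repEq j p (blk (j+1) c) w' h'
    exact ⟨hpj.symm, c, rfl, hw.symm⟩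

theorem blkSuf : ∀ (c j : ℕ) (u w' : List Bool),
    blk j c = u ++ true :: w' → ∃ j' c', 1 ≤ j' ∧ w' = blk j' c' := by
  intro c
  induction c with
  | zero =>
    intro j u w' h
    exfalso
    have := congrArg List.length h
    simp [blk] at this
  | succ c ih =>
    intro j u w' h
    have h' : u ++ true :: w' = repA j ++ true :: blk (j+1) c := by
      rw [← h]; rfl
    rcases splitB j u w' (blk (j+1) c) h' with ⟨_, h2⟩ | ⟨u₂, _, h2⟩
    · exact ⟨j+1, c, by omega, h2⟩
    · exact ih (j+1) u₂ w' h2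

theorem blkEndB : ∀ (c j : ℕ), EndB (blk j c) := by
  intro c
  induction c with
  | zero => intro j; left; rfl
  | succ c ih =>
    intro j
    rcases ih (j+1) with h | ⟨u, hu⟩
    · right; exact ⟨repA j, by simp [blk, h]⟩
    · right; exact ⟨repA j ++ true :: u, by simp [blk, hu]⟩

theorem endB_tail {x : Bool} {v : List Bool} (h : EndB (x :: v)) (hv : v ≠ []) : EndB v := by
  rcases h with h | ⟨u, hu⟩
  · simp at h
  · cases u with
    | nil => simp at hu; exact absurd hu.2 hv
    | cons b u₂ =>
      simp only [List.cons_append, List.cons.injEq] at hu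
      right; exact ⟨u₂, hu.2⟩

theorem parse : ∀ (v : List Bool), v ≠ [] → EndB v →
    ∃ p v₃, v = repA p ++ true :: v₃ ∧ EndB v₃ := by
  intro v
  induction v with
  | nil => intro h; exact absurd rfl h
  | cons x v ih =>
    intro _ hend
    cases x with
    | true =>
      refine ⟨0, v, by simp [repA], ?_⟩
      rcases Classical.em (v = []) with h | h
      · left; exact h
      · exact endB_tail hend h
    | false =>
      have hv : v ≠ [] := by
        rintro rfl
        rcases hend with h | ⟨u, hu⟩
        · simp at h
        · have : (false : Bool) = true := by
            have := congrArg List.getLast? hu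
            simpa using this
          simp at this
      obtain ⟨p, v₃, h1, h2⟩ := ih hv (endB_tail hend hv)
      exact ⟨p+1, v₃, by simp [repA, List.replicate_succ, h1], h2⟩



section Machine

variable {M : Type} [Group M]

open St

def δg (g : M) : St → Bool → Set (St × M)
  | q0, false => {(all, 1)}
  | q0, true => {(sk, 1), (u1, 1), (v1, 1), (t1, 1)}
  | all, _ => {(all, 1)}
  | t1, true => {(all, 1)}
  | t1, false => {(t2, 1)}
  | t2, false => {(all, 1)}
  | t2, true => ∅
  | sk, false => {(sk, 1), (pE, 1)}
  | sk, true => {(sk, 1), (u1, 1), (v1, 1)}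
  | pE, _ => ∅
  | u1, false => {(u1, g), (u2, 1)}
  | u1, true => {(u3, 1)}
  | u2, false => {(u2, 1)}
  | u2, true => {(u3, 1)}
  | u3, false => {(u3, g⁻¹)}
  | u3, true => {(all, 1)}
  | v1, false => {(v1, g)}
  | v1, true => {(v2, g ^ 2)}
  | v2, false => {(v2, g⁻¹), (all, g⁻¹)}
  | v2, true => ∅

def mA (g : M) : EFA Bool M where
  Q := St
  δ := δg g
  fin := by
    intro q a
    cases q <;> cases a <;> simp only [δg] <;>
      first
        | exact Set.finite_empty
        | exact Set.toFinite _
  q₀ := q0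
  F := {q0, all, pE}

variable {g : M}

theorem stepId {s q : St} {w : List Bool} {m : M} {c k} {a : Bool}
    (h : (s, (1 : M)) ∈ δg g q a) (h2 : (mA g).Steps (s, w, m) c k) :
    (mA g).Steps (q, a :: w, m) c k := by
  have := EFA.Steps.step (A := mA g) (a := a) (m := m) h (by simpa using h2)
  simpa using this

theorem stepNe {s q : St} {r : M} {w : List Bool} {m : M} {c k} {a : Bool}
    (h : (s, r) ∈ δg g q a) (hr : r ≠ 1) (h2 : (mA g).Steps (s, w, m * r) c k) :
    (mA g).Steps (q, a :: w, m) c (k + 1) := by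
  have := EFA.Steps.step (A := mA g) (a := a) (m := m) h h2
  simpa [hr] using this

theorem stepsTrans {c1 c2 c3 : (mA g).Q × List Bool × M} {k1 k2 : ℕ}
    (h1 : (mA g).Steps c1 c2 k1) (h2 : (mA g).Steps c2 c3 k2) :
    (mA g).Steps c1 c3 (k1 + k2) := by
  induction h1 with
  | refl c => simpa using h2
  | @step s r q w m c k a h _ ih2 =>
    by_cases hr : r = 1
    · simpa [hr] using EFA.Steps.step (A := mA g) h (ih2 h2)
    · simpa [hr, Nat.add_right_comm] using EFA.Steps.step (A := mA g) h (ih2 h2)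

theorem allRun : ∀ (u : List Bool) (m : M), (mA g).Steps (all, u, m) (all, [], m) 0 := by
  intro u m
  induction u with
  | nil => exact EFA.Steps.refl _
  | cons x u ih =>
    refine stepId ?_ ih
    cases x <;> simp [δg]

theorem skSkip : ∀ (u l : List Bool) (m : M), (mA g).Steps (sk, u ++ l, m) (sk, l, m) 0 := by
  intro u
  induction u with
  | nil => intro l m; exact EFA.Steps.refl _
  | cons x u ih =>
    intro l m
    refine stepId ?_ (ih l m)
    cases x <;> simp [δg]

theorem u2Skip : ∀ (d : ℕ) (l : List Bool) (m : M),
    (mA g).Steps (u2, repA d ++ l, m) (u2, l, m) 0 := by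
  intro d
  induction d with
  | zero => intro l m; exact EFA.Steps.refl _
  | succ d ih =>
    intro l m
    refine stepId ?_ (ih l m)
    simp [δg]


theorem gne1 (hg : ¬ IsOfFinOrder g) : g ≠ 1 := by
  intro h
  exact hg (isOfFinOrder_iff_pow_eq_one.2 ⟨1, by omega, by simp [h]⟩)

theorem g2ne1 (hg : ¬ IsOfFinOrder g) : g ^ 2 ≠ 1 := by
  intro h
  exact hg (isOfFinOrder_iff_pow_eq_one.2 ⟨2, by omega, h⟩)

theorem ginvne1 (hg : ¬ IsOfFinOrder g) : g⁻¹ ≠ 1 := by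
  intro h
  exact gne1 hg (by simpa using congrArg (·⁻¹) h)

theorem powInj (hg : ¬ IsOfFinOrder g) {a b : ℕ} (h : g ^ a = g ^ b) : a = b :=
  (injective_pow_iff_not_isOfFinOrder.2 hg) h

theorem u1Count (hg : ¬ IsOfFinOrder g) : ∀ (p : ℕ) (l : List Bool) (m : M),
    (mA g).Steps (u1, repA p ++ l, m) (u1, l, m * g ^ p) p := by
  intro p
  induction p with
  | zero => intro l m; simpa using EFA.Steps.refl (A := mA g) (u1, l, m)
  | succ p ih =>
    intro l m
    have h1 : (mA g).Steps (u1, repA p ++ l, m * g) (u1, l, m * g * g ^ p) p := ih l (m * g)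
    have h2 := stepNe (a := false) (q := u1) (by simp [δg] : ((u1 : St), g) ∈ δg g u1 false)
      (gne1 hg) h1
    have e1 : (repA (p+1) ++ l) = false :: (repA p ++ l) := by
      simp [repA, List.replicate_succ]
    have e2 : m * g * g ^ p = m * g ^ (p+1) := by
      rw [mul_assoc, ← pow_succ']
    rw [e1]
    rw [e2] at h2
    exact h2

theorem v1Count (hg : ¬ IsOfFinOrder g) : ∀ (p : ℕ) (l : List Bool) (m : M),
    (mA g).Steps (v1, repA p ++ l, m) (v1, l, m * g ^ p) p := by
  intro p
  induction p with
  | zero => intro l m; simpa using EFA.Steps.refl (A := mA g) (v1, l, m)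
  | succ p ih =>
    intro l m
    have h1 := ih l (m * g)
    have h2 := stepNe (a := false) (q := v1) (by simp [δg] : ((v1 : St), g) ∈ δg g v1 false)
      (gne1 hg) h1
    have e1 : (repA (p+1) ++ l) = false :: (repA p ++ l) := by
      simp [repA, List.replicate_succ]
    have e2 : m * g * g ^ p = m * g ^ (p+1) := by
      rw [mul_assoc, ← pow_succ']
    rw [e1]; rw [e2] at h2; exact h2

theorem u3Count (hg : ¬ IsOfFinOrder g) : ∀ (p : ℕ) (l : List Bool) (m : M),
    (mA g).Steps (u3, repA p ++ l, m * g ^ p) (u3, l, m) p := by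
  intro p
  induction p with
  | zero => intro l m; simpa using EFA.Steps.refl (A := mA g) (u3, l, m)
  | succ p ih =>
    intro l m
    have h1 := ih l m
    have h2 := stepNe (a := false) (q := u3) (by simp [δg] : ((u3 : St), g⁻¹) ∈ δg g u3 false)
      (ginvne1 hg) (by
        have e : m * g ^ (p+1) * g⁻¹ = m * g ^ p := by
          rw [pow_succ, ← mul_assoc]
          simp [mul_assoc]
        rw [e]; exact h1)
    have e1 : (repA (p+1) ++ l) = false :: (repA p ++ l) := by
      simp [repA, List.replicate_succ]
    rw [e1]; exact h2

theorem v2Count (hg : ¬ IsOfFinOrder g) : ∀ (d : ℕ), 1 ≤ d → ∀ (l : List Bool) (m : M),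
    (mA g).Steps (v2, repA d ++ l, m * g ^ d) (all, l, m) d := by
  intro d
  induction d with
  | zero => omega
  | succ d ih =>
    intro _ l m
    rcases Nat.eq_zero_or_pos d with rfl | hd
    · have h2 := stepNe (a := false) (q := v2) (by simp [δg] : ((all : St), g⁻¹) ∈ δg g v2 false)
        (ginvne1 hg) (by
          have e : m * g ^ 1 * g⁻¹ = m := by simp
          rw [e]; exact EFA.Steps.refl (A := mA g) (all, l, m))
      simpa [repA, List.replicate_succ] using h2
    · have h1 := ih hd l m
      have h2 := stepNe (a := false) (q := v2) (by simp [δg] : ((v2 : St), g⁻¹) ∈ δg g v2 false)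
        (ginvne1 hg) (by
          have e : m * g ^ (d+1) * g⁻¹ = m * g ^ d := by
            rw [pow_succ, ← mul_assoc]; simp [mul_assoc]
          rw [e]; exact h1)
      have e1 : (repA (d+1) ++ l) = false :: (repA d ++ l) := by
        simp [repA, List.replicate_succ]
      rw [e1]; exact h2

theorem ltRun (hg : ¬ IsOfFinOrder g) (j p : ℕ) (v₃ : List Bool) (hp : p ≤ j) :
    (mA g).Steps (u1, repA j ++ true :: (repA p ++ true :: v₃), 1) (all, [], 1) (2 * p) := by
  have hrep : repA j = repA p ++ repA (j - p) := by
    rw [← List.replicate_add]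
    congr 1
    omega
  have h1 := u1Count (g := g) hg p (repA (j-p) ++ true :: (repA p ++ true :: v₃)) 1
  -- from (u1, repA (j-p) ++ true :: repA p ++ true :: v₃, g ^ p) to (all, [], 1) with p steps
  have h3 : (mA g).Steps (u3, repA p ++ true :: v₃, (1:M) * g ^ p) (all, [], 1) p := by
    have hu3 := u3Count (g := g) hg p (true :: v₃) 1
    have hstep : (mA g).Steps (u3, true :: v₃, (1:M)) (all, [], 1) 0 :=
      stepId (show ((all : St), (1:M)) ∈ δg g u3 true by simp [δg]) (allRun v₃ 1)
    simpa using stepsTrans hu3 hstep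
  have h2 : (mA g).Steps (u1, repA (j-p) ++ true :: (repA p ++ true :: v₃), (1:M) * g ^ p)
      (all, [], 1) p := by
    rcases Nat.eq_zero_or_pos (j - p) with he | he
    · rw [he]
      simp only [repA, List.replicate_zero, List.nil_append]
      exact stepId (show ((u3 : St), (1:M)) ∈ δg g u1 true by simp [δg]) h3
    · obtain ⟨e, he2⟩ : ∃ e, j - p = e + 1 := ⟨j - p - 1, by omega⟩
      rw [he2]
      have e1 : (repA (e+1) ++ true :: (repA p ++ true :: v₃))
          = false :: (repA e ++ true :: (repA p ++ true :: v₃)) := by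
        simp [repA, List.replicate_succ]
      rw [e1]
      refine stepId (by simp [δg] : ((u2 : St), (1:M)) ∈ δg g u1 false) ?_
      have hsk := u2Skip (g := g) e (true :: (repA p ++ true :: v₃)) ((1:M) * g ^ p)
      have hstep2 : (mA g).Steps (u2, true :: (repA p ++ true :: v₃), (1:M) * g ^ p)
          (all, [], 1) p := stepId (show ((u3 : St), (1:M)) ∈ δg g u2 true by simp [δg]) h3
      simpa using stepsTrans hsk hstep2
  have hfinal := stepsTrans h1 h2
  rw [hrep, List.append_assoc]
  simpa [two_mul] using hfinal

theorem gtRun (hg : ¬ IsOfFinOrder g) (j p : ℕ) (v₃ : List Bool) (hp : j + 2 ≤ p) :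
    (mA g).Steps (v1, repA j ++ true :: (repA p ++ true :: v₃), 1) (all, [], 1)
      (2 * j + 3) := by
  have hrep : repA p = repA (j+2) ++ repA (p - (j+2)) := by
    rw [← List.replicate_add]; congr 1; omega
  have h1 := v1Count (g := g) hg j (true :: (repA p ++ true :: v₃)) 1
  have h3 : (mA g).Steps (v2, repA p ++ true :: v₃, (1:M) * g ^ (j+2)) (all, [], 1) (j + 2) := by
    rw [hrep, List.append_assoc]
    have hv2 := v2Count (g := g) hg (j+2) (by omega) (repA (p-(j+2)) ++ true :: v₃) 1
    have hall := allRun (g := g) (repA (p-(j+2)) ++ true :: v₃) 1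
    simpa using stepsTrans hv2 hall
  have h2 : (mA g).Steps (v1, true :: (repA p ++ true :: v₃), (1:M) * g ^ j)
      (all, [], 1) (j + 3) := by
    refine stepNe (by simp [δg] : ((v2 : St), g^2) ∈ δg g v1 true) (g2ne1 hg) ?_
    have e : (1:M) * g ^ j * g ^ 2 = (1:M) * g ^ (j+2) := by
      rw [mul_assoc, ← pow_add]
    rw [e]; exact h3
  have := stepsTrans h1 h2
  have ec : j + (j + 3) = 2 * j + 3 := by omega
  rw [← ec]
  exact this


theorem core (hg : ¬ IsOfFinOrder g) :
    ∀ (n : ℕ) (v : List Bool) (j : ℕ), v.length ≤ n → EndB v →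
    (∀ c, v ≠ blk (j+1) c) →
    ∃ (X qf : St) (i k : ℕ),
      (X = sk ∨ X = u1 ∨ X = v1) ∧ (qf = q0 ∨ qf = all ∨ qf = pE) ∧
      k ≤ 2 * i + 1 ∧ i * i + i ≤ 2 * v.length + (j+1)*(j+1) + (j+1) ∧
      (mA g).Steps (X, repA j ++ true :: v, 1) (qf, [], 1) k := by
  intro n
  induction n with
  | zero =>
    intro v j hn _ hv
    exfalso
    exact hv 0 (by simpa [blk] using List.length_eq_zero_iff.mp (by omega))
  | succ n ih =>
    intro v j hn hend hv
    rcases Classical.em (v = []) with rfl | hne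
    · exact absurd rfl (hv 0)
    obtain ⟨p, v₃, hpv, hend₃⟩ := parse v hne hend
    have hlen : v.length = p + 1 + v₃.length := by simp [hpv, repA]; omega
    rcases lt_trichotomy p (j+1) with hp | hp | hp
    · -- p ≤ j : LT witness
      refine ⟨u1, all, j+1, 2*p, Or.inr (Or.inl rfl), Or.inr (Or.inl rfl), by omega, by linarith, ?_⟩
      rw [hpv]
      exact ltRun hg j p v₃ (by omega)
    · -- p = j+1 : recurse
      subst hp
      have hv₃ : ∀ c, v₃ ≠ blk (j+1+1) c := by
        intro c hc
        exact hv (c+1) (by rw [hpv, hc]; rfl)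
      obtain ⟨X', qf, i, k, hX', hqf, hk, hpot, hrun⟩ :=
        ih v₃ (j+1) (by omega) hend₃ hv₃
      refine ⟨sk, qf, i, k, Or.inl rfl, hqf, hk, ?_, ?_⟩
      · have hq : (j+1+1)*(j+1+1) + (j+1+1) = (j+1)*(j+1) + (j+1) + 2*(j+2) := by ring
        linarith
      · rw [hpv]
        have h2 : (mA g).Steps (sk, true :: (repA (j+1) ++ true :: v₃), 1) (qf, [], 1) k := by
          refine stepId ?_ hrun
          rcases hX' with rfl | rfl | rfl <;> simp [δg]
        have h1 := skSkip (g := g) (repA j) (true :: (repA (j+1) ++ true :: v₃)) (1 : M)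
        simpa using stepsTrans h1 h2
    · -- p ≥ j+2 : GT witness
      refine ⟨v1, all, j+1, 2*j+3, Or.inr (Or.inr rfl), Or.inr (Or.inl rfl), by omega, by linarith, ?_⟩
      rw [hpv]
      exact gtRun hg j p v₃ (by omega)


theorem accEmpty : (mA g).AcceptsN [] 0 :=
  ⟨q0, Or.inl rfl, EFA.Steps.refl _⟩

theorem accA (w : List Bool) : (mA g).AcceptsN (false :: w) 0 :=
  ⟨all, Or.inr (Or.inl rfl),
    stepId (show ((all : St), (1:M)) ∈ δg g q0 false by simp [δg]) (allRun w 1)⟩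

theorem accBB (w : List Bool) : (mA g).AcceptsN (true :: true :: w) 0 :=
  ⟨all, Or.inr (Or.inl rfl),
    stepId (show ((t1 : St), (1:M)) ∈ δg g q0 true by simp [δg])
      (stepId (show ((all : St), (1:M)) ∈ δg g t1 true by simp [δg]) (allRun w 1))⟩

theorem accBAA (w : List Bool) : (mA g).AcceptsN (true :: false :: false :: w) 0 :=
  ⟨all, Or.inr (Or.inl rfl),
    stepId (show ((t1 : St), (1:M)) ∈ δg g q0 true by simp [δg])
      (stepId (show ((t2 : St), (1:M)) ∈ δg g t1 false by simp [δg])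
        (stepId (show ((all : St), (1:M)) ∈ δg g t2 false by simp [δg]) (allRun w 1)))⟩

theorem accEndA (u : List Bool) : (mA g).AcceptsN (true :: (u ++ [false])) 0 := by
  refine ⟨pE, Or.inr (Or.inr rfl), ?_⟩
  refine stepId (show ((sk : St), (1:M)) ∈ δg g q0 true by simp [δg]) ?_
  have h1 := skSkip (g := g) u [false] (1 : M)
  have h2 : (mA g).Steps (sk, [false], 1) (pE, [], 1) 0 :=
    stepId (show ((pE : St), (1:M)) ∈ δg g sk false by simp [δg]) (EFA.Steps.refl _)
  simpa using stepsTrans h1 h2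

theorem complete (hg : ¬ IsOfFinOrder g) (w : List Bool) (hw : w ∉ Sl) :
    ∃ k i, (mA g).AcceptsN w k ∧ k ≤ 2 * i + 1 ∧ i * i ≤ 2 * w.length + 6 := by
  match w with
  | [] => exact ⟨0, 0, accEmpty, by omega, by omega⟩
  | false :: w' => exact ⟨0, 0, accA w', by omega, by omega⟩
  | [true] => exact absurd ⟨0, rfl⟩ hw
  | true :: true :: w' => exact ⟨0, 0, accBB w', by omega, by omega⟩
  | [true, false] => exact ⟨0, 0, accEndA [], by omega, by omega⟩
  | true :: false :: false :: w' => exact ⟨0, 0, accBAA w', by omega, by omega⟩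
  | true :: false :: true :: v =>
    rcases List.eq_nil_or_concat v with rfl | ⟨v', x, rfl⟩
    · exact absurd ⟨1, by simp [blk, repA]⟩ hw
    cases x with
    | false =>
      refine ⟨0, 0, ?_, by omega, by omega⟩
      have := accEndA (g := g) (false :: true :: v')
      simpa [List.concat_eq_append] using this
    | true =>
      have hend : EndB (v' ++ [true]) := Or.inr ⟨v', rfl⟩
      have hv : ∀ c, v' ++ [true] ≠ blk 2 c := by
        intro c hc
        exact hw ⟨c + 1, by simp [blk, repA, List.replicate_succ, hc]⟩
      obtain ⟨X, qf, i, k, hX, hqf, hk, hpot, hrun⟩ :=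
        core hg (v' ++ [true]).length (v' ++ [true]) 1 le_rfl hend hv
      refine ⟨k, i, ⟨qf, ?_, ?_⟩, hk, ?_⟩
      · rcases hqf with rfl | rfl | rfl
        exacts [Or.inl rfl, Or.inr (Or.inl rfl), Or.inr (Or.inr rfl)]
      · refine stepId (s := X) ?_ ?_
        · rcases hX with rfl | rfl | rfl <;> simp [mA, δg]
        · show (mA g).Steps (X, false :: true :: v'.concat true, 1) (qf, [], 1) k
          simpa [repA, List.concat_eq_append] using hrun
      · simp only [List.concat_eq_append, List.length_cons, List.length_append] at hpot ⊢
        linarith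

theorem arith {n k i : ℕ} (h1 : k ≤ 2 * i + 1) (h2 : i * i ≤ 2 * n + 6) :
    k ≤ 6 * Nat.sqrt n + 7 := by
  have hs : Nat.sqrt n * Nat.sqrt n ≤ n := Nat.sqrt_le n
  have hs2 : n < (Nat.sqrt n + 1) * (Nat.sqrt n + 1) := Nat.lt_succ_sqrt n
  set s := Nat.sqrt n with hsdef
  have hi : i ≤ 3 * s + 3 := by
    by_contra hcon
    push_neg at hcon
    have h3 : 3 * s + 4 ≤ i := hcon
    have h4 : (3*s+4) * (3*s+4) ≤ i * i := Nat.mul_le_mul h3 h3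
    have e1 : (3*s+4) * (3*s+4) = 9*(s*s) + 24*s + 16 := by ring
    have e2 : (s+1) * (s+1) = s*s + 2*s + 1 := by ring
    linarith
  omega


def specU3 (g : M) (w : List Bool) (m : M) : Prop :=
  ∃ d w', w = repA d ++ true :: w' ∧ m = g ^ d

def specU2 (g : M) (w : List Bool) (m : M) : Prop :=
  ∃ d w', w = repA d ++ true :: w' ∧ specU3 g w' m

def specU1 (g : M) (w : List Bool) (m : M) : Prop :=
  ∃ p q' w' v, v ≤ p ∧ w = repA p ++ true :: (repA q' ++ true :: w') ∧ m * g ^ v = g ^ q'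

def specV2 (g : M) (w : List Bool) (m : M) : Prop :=
  ∃ d w', 1 ≤ d ∧ w = repA d ++ w' ∧ m = g ^ d

def specV1 (g : M) (w : List Bool) (m : M) : Prop :=
  ∃ p w', w = repA p ++ true :: w' ∧ specV2 g w' (m * g ^ p * g ^ 2)

def specSk (g : M) (w : List Bool) (m : M) : Prop :=
  ∃ u x w', w = u ++ x :: w' ∧
    ((x = false ∧ w' = [] ∧ m = 1) ∨ (x = true ∧ (specU1 g w' m ∨ specV1 g w' m)))

def specT2 (w : List Bool) (m : M) : Prop := ∃ w', w = false :: w' ∧ m = 1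

def specT1 (w : List Bool) (m : M) : Prop :=
  (∃ w', w = true :: w' ∧ m = 1) ∨ (∃ w', w = false :: w' ∧ specT2 w' m)

def specQ0 (g : M) (w : List Bool) (m : M) : Prop :=
  (w = [] ∧ m = 1) ∨ (∃ w', w = false :: w' ∧ m = 1) ∨
    (∃ w', w = true :: w' ∧
      (specSk g w' m ∨ specU1 g w' m ∨ specV1 g w' m ∨ specT1 w' m))

def SPEC (g : M) : St → List Bool → M → Prop
  | q0 => specQ0 g
  | all => fun _ m => m = 1
  | t1 => specT1
  | t2 => fun w m => ∃ w', w = false :: w' ∧ m = 1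
  | sk => specSk g
  | pE => fun w m => w = [] ∧ m = 1
  | u1 => specU1 g
  | u2 => specU2 g
  | u3 => specU3 g
  | v1 => specV1 g
  | v2 => specV2 g

theorem sound : ∀ {c cf : (mA g).Q × List Bool × M} {k : ℕ},
    (mA g).Steps c cf k → cf.1 ∈ (mA g).F → cf.2.1 = [] → cf.2.2 = 1 →
    SPEC g c.1 c.2.1 c.2.2 := by
  intro c cf k h
  induction h with
  | refl c =>
    intro hf hnil hone
    obtain ⟨q, w, m⟩ := c
    simp only at hnil hone
    subst hnil; subst hone
    have : q = q0 ∨ q = all ∨ q = pE := hf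
    rcases this with rfl | rfl | rfl
    · exact Or.inl ⟨rfl, rfl⟩
    · rfl
    · exact ⟨rfl, rfl⟩
  | @step st' r q w m c k a hmem hsteps ih =>
    intro hf hnil hone
    have IH := ih hf hnil hone
    simp only at IH ⊢
    clear ih hsteps hf hnil hone
    have hmem' : (Prod.mk (α := St) st' r) ∈ δg g q a := hmem
    clear hmem
    cases q <;> cases a
    -- q0 false
    · simp only [δg, Set.mem_singleton_iff, Prod.mk.injEq] at hmem'
      obtain ⟨rfl, rfl⟩ := hmem'
      rw [mul_one] at IH
      exact Or.inr (Or.inl ⟨w, rfl, IH⟩)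
    -- q0 true
    · simp only [δg, Set.mem_insert_iff, Set.mem_singleton_iff, Prod.mk.injEq] at hmem'
      rcases hmem' with ⟨rfl, rfl⟩ | ⟨rfl, rfl⟩ | ⟨rfl, rfl⟩ | ⟨rfl, rfl⟩ <;>
        rw [mul_one] at IH
      · exact Or.inr (Or.inr ⟨w, rfl, Or.inl IH⟩)
      · exact Or.inr (Or.inr ⟨w, rfl, Or.inr (Or.inl IH)⟩)
      · exact Or.inr (Or.inr ⟨w, rfl, Or.inr (Or.inr (Or.inl IH))⟩)
      · exact Or.inr (Or.inr ⟨w, rfl, Or.inr (Or.inr (Or.inr IH))⟩)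
    -- all false/true
    · simp only [δg, Set.mem_singleton_iff, Prod.mk.injEq] at hmem'
      obtain ⟨rfl, rfl⟩ := hmem'
      rw [mul_one] at IH
      exact IH
    · simp only [δg, Set.mem_singleton_iff, Prod.mk.injEq] at hmem'
      obtain ⟨rfl, rfl⟩ := hmem'
      rw [mul_one] at IH
      exact IH
    -- t1 false
    · simp only [δg, Set.mem_singleton_iff, Prod.mk.injEq] at hmem'
      obtain ⟨rfl, rfl⟩ := hmem'
      rw [mul_one] at IH
      exact Or.inr ⟨w, rfl, IH⟩
    -- t1 true
    · simp only [δg, Set.mem_singleton_iff, Prod.mk.injEq] at hmem'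
      obtain ⟨rfl, rfl⟩ := hmem'
      rw [mul_one] at IH
      exact Or.inl ⟨w, rfl, IH⟩
    -- t2 false
    · simp only [δg, Set.mem_singleton_iff, Prod.mk.injEq] at hmem'
      obtain ⟨rfl, rfl⟩ := hmem'
      rw [mul_one] at IH
      exact ⟨w, rfl, IH⟩
    -- t2 true
    · simp [δg] at hmem'
    -- sk false
    · simp only [δg, Set.mem_insert_iff, Set.mem_singleton_iff, Prod.mk.injEq] at hmem'
      rcases hmem' with ⟨rfl, rfl⟩ | ⟨rfl, rfl⟩ <;> rw [mul_one] at IH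
      · obtain ⟨u, x, w', hw, hcase⟩ := IH
        exact ⟨false :: u, x, w', by rw [hw]; rfl, hcase⟩
      · obtain ⟨h1, h2⟩ := IH
        exact ⟨[], false, w, rfl, Or.inl ⟨rfl, h1, h2⟩⟩
    -- sk true
    · simp only [δg, Set.mem_insert_iff, Set.mem_singleton_iff, Prod.mk.injEq] at hmem'
      rcases hmem' with ⟨rfl, rfl⟩ | ⟨rfl, rfl⟩ | ⟨rfl, rfl⟩ <;> rw [mul_one] at IH
      · obtain ⟨u, x, w', hw, hcase⟩ := IH
        exact ⟨true :: u, x, w', by rw [hw]; rfl, hcase⟩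
      · exact ⟨[], true, w, rfl, Or.inr ⟨rfl, Or.inl IH⟩⟩
      · exact ⟨[], true, w, rfl, Or.inr ⟨rfl, Or.inr IH⟩⟩
    -- pE
    · simp [δg] at hmem'
    · simp [δg] at hmem'
    -- u1 false
    · simp only [δg, Set.mem_insert_iff, Set.mem_singleton_iff, Prod.mk.injEq] at hmem'
      rcases hmem' with ⟨rfl, hr⟩ | ⟨rfl, rfl⟩
      · obtain ⟨p, q', w', v, hv, hw, heq⟩ := IH
        refine ⟨p+1, q', w', v+1, by omega, by rw [hw]; simp [repA, List.replicate_succ], ?_⟩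
        rw [← heq, pow_succ']
        rw [← mul_assoc]
      · rw [mul_one] at IH
        obtain ⟨d, w', hw, e, w'', hw', heq⟩ := IH
        refine ⟨d+1, e, w'', 0, by omega, ?_, by simpa using heq⟩
        rw [hw, hw']
        simp [repA, List.replicate_succ]
    -- u1 true
    · simp only [δg, Set.mem_singleton_iff, Prod.mk.injEq] at hmem'
      obtain ⟨rfl, rfl⟩ := hmem'
      rw [mul_one] at IH
      obtain ⟨e, w', hw, heq⟩ := IH
      exact ⟨0, e, w', 0, le_rfl, by rw [hw]; rfl, by simpa using heq⟩
    -- u2 false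
    · simp only [δg, Set.mem_singleton_iff, Prod.mk.injEq] at hmem'
      obtain ⟨rfl, rfl⟩ := hmem'
      rw [mul_one] at IH
      obtain ⟨d, w', hw, hu3⟩ := IH
      exact ⟨d+1, w', by rw [hw]; simp [repA, List.replicate_succ], hu3⟩
    -- u2 true
    · simp only [δg, Set.mem_singleton_iff, Prod.mk.injEq] at hmem'
      obtain ⟨rfl, rfl⟩ := hmem'
      rw [mul_one] at IH
      exact ⟨0, w, rfl, IH⟩
    -- u3 false
    · simp only [δg, Set.mem_singleton_iff, Prod.mk.injEq] at hmem'
      obtain ⟨rfl, hr⟩ := hmem'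
      obtain ⟨d, w', hw, heq⟩ := IH
      refine ⟨d+1, w', by rw [hw]; simp [repA, List.replicate_succ], ?_⟩
      have : m = g ^ d * g := by
        rw [← heq]
        simp [mul_assoc]
      rw [this, ← pow_succ]
    -- u3 true
    · simp only [δg, Set.mem_singleton_iff, Prod.mk.injEq] at hmem'
      obtain ⟨rfl, rfl⟩ := hmem'
      rw [mul_one] at IH
      exact ⟨0, w, rfl, by simpa [SPEC] using IH⟩
    -- v1 false
    · simp only [δg, Set.mem_singleton_iff, Prod.mk.injEq] at hmem'
      obtain ⟨rfl, hr⟩ := hmem'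
      obtain ⟨p, w', hw, hv2⟩ := IH
      refine ⟨p+1, w', by rw [hw]; simp [repA, List.replicate_succ], ?_⟩
      have : m * g ^ (p+1) * g ^ 2 = m * g * g ^ p * g ^ 2 := by
        rw [pow_succ', ← mul_assoc]
      rw [this]
      exact hv2
    -- v1 true
    · simp only [δg, Set.mem_singleton_iff, Prod.mk.injEq] at hmem'
      obtain ⟨rfl, hr⟩ := hmem'
      refine ⟨0, w, rfl, ?_⟩
      simpa [SPEC] using IH
    -- v2 false
    · simp only [δg, Set.mem_insert_iff, Set.mem_singleton_iff, Prod.mk.injEq] at hmem'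
      rcases hmem' with ⟨rfl, hr⟩ | ⟨rfl, hr⟩
      · obtain ⟨d, w', hd, hw, heq⟩ := IH
        refine ⟨d+1, w', by omega, by rw [hw]; simp [repA, List.replicate_succ], ?_⟩
        have : m = g ^ d * g := by rw [← heq]; simp [mul_assoc]
        rw [this, ← pow_succ]
      · have IH' : m * g⁻¹ = 1 := IH
        have hm : m = g ^ 1 := by
          have h2 := congrArg (· * g) IH'
          simpa [mul_assoc] using h2
        exact ⟨1, w, le_rfl, by simp [repA], hm⟩
    -- v2 true
    · simp [δg] at hmem'

theorem notU1 (hg : ¬ IsOfFinOrder g) (j c : ℕ) : ¬ specU1 g (blk j c) (1 : M) := by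
  rintro ⟨p, q', w', v, hv, hw, heq⟩
  obtain ⟨rfl, c', rfl, hw'⟩ := blkDecomp c j p _ hw
  obtain ⟨rfl, c'', rfl, _⟩ := blkDecomp c' (p+1) q' _ hw'.symm
  rw [one_mul] at heq
  have := powInj hg heq
  omega

theorem notV1 (hg : ¬ IsOfFinOrder g) (j c : ℕ) : ¬ specV1 g (blk j c) (1 : M) := by
  rintro ⟨p, w', hw, d, w'', hd, hw2, heq⟩
  obtain ⟨rfl, c', rfl, hw'⟩ := blkDecomp c j p _ hw
  rw [one_mul, ← pow_add] at heq
  have hdj := powInj hg heq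
  subst hw'
  cases c' with
  | zero =>
    have : (0:ℕ) = d + w''.length := by simpa [blk, repA] using congrArg List.length hw2
    omega
  | succ c'' =>
    have hb : repA (p+1) ++ true :: blk (p+1+1) c'' = repA d ++ w'' := hw2
    have := lead0 d (p+1) _ _ hb
    omega

theorem notSk (hg : ¬ IsOfFinOrder g) (j c : ℕ) : ¬ specSk g (blk j c) (1 : M) := by
  rintro ⟨u, x, w', hw, hcase⟩
  rcases hcase with ⟨rfl, rfl, -⟩ | ⟨rfl, hUV⟩
  · -- blk ends with false: impossible
    cases c with
    | zero =>
      have : (0:ℕ) = u.length + 1 := by simpa [blk] using congrArg List.length hw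
      omega
    | succ c' =>
      obtain ⟨u', hu'⟩ := blkEndB (c'+1) j |>.resolve_left (by
        intro h
        have : (0:ℕ) = u.length + 1 := by
          have := congrArg List.length (h ▸ hw)
          simpa using this
        omega)
      have : (false : Bool) = true := lastcat (by rw [← hw, hu'])
      simp at this
  · obtain ⟨j', c', hj', hw'⟩ := blkSuf c j u w' hw
    subst hw'
    rcases hUV with h | h
    · exact notU1 hg j' c' h
    · exact notV1 hg j' c' h

theorem noAcceptSl (hg : ¬ IsOfFinOrder g) (c k : ℕ) :
    ¬ (mA g).AcceptsN (true :: blk 1 c) k := by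
  rintro ⟨qf, hqf, hrun⟩
  have hs := sound (g := g) hrun (by simpa [mA] using hqf) rfl rfl
  have hs' : specQ0 g (true :: blk 1 c) 1 := hs
  rcases hs' with ⟨h, -⟩ | ⟨w', h, -⟩ | ⟨w', h, hrest⟩
  · simp at h
  · simp at h
  · have hw' : w' = blk 1 c := by simpa using h.symm
    subst hw'
    rcases hrest with h | h | h | h
    · exact notSk hg 1 c h
    · exact notU1 hg 1 c h
    · exact notV1 hg 1 c h
    · rcases h with ⟨w'', hw'', -⟩ | ⟨w'', hw'', ht2⟩
      · cases c with
        | zero => simp [blk] at hw''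
        | succ c' => simp [blk, repA, List.replicate_succ] at hw''
      · cases c with
        | zero => simp [blk] at hw''
        | succ c' =>
          have : blk 1 (c'+1) = false :: true :: blk 2 c' := by
            simp [blk, repA]
          rw [this] at hw''
          obtain ⟨w₃, hww, -⟩ := ht2
          rw [hww] at hw''
          simp at hw''

theorem gmcWle (hg : ¬ IsOfFinOrder g) (w : List Bool) :
    (mA g).gmcW w ≤ 6 * Nat.sqrt w.length + 7 := by
  by_cases hw : w ∈ Sl
  · obtain ⟨c, rfl⟩ := hw
    have he : {k | (mA g).AcceptsN (true :: blk 1 c) k} = ∅ := by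
      ext k
      simp only [Set.mem_setOf_eq, Set.mem_empty_iff_false, iff_false]
      exact noAcceptSl hg c k
    rw [EFA.gmcW, he, Nat.sInf_empty]
    omega
  · obtain ⟨k, i, acc, h1, h2⟩ := complete hg w hw
    exact le_trans (Nat.sInf_le acc) (arith h1 h2)

theorem gmcFunLe (hg : ¬ IsOfFinOrder g) (n : ℕ) :
    (mA g).gmcFun n ≤ 6 * Nat.sqrt n + 7 := by
  apply csSup_le
  · exact ⟨(mA g).gmcW (List.replicate n false),
      ⟨List.replicate n false, by simp, rfl⟩⟩
  · rintro m ⟨w, hlen, rfl⟩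
    calc (mA g).gmcW w ≤ 6 * Nat.sqrt w.length + 7 := gmcWle hg w
    _ = 6 * Nat.sqrt n + 7 := by rw [hlen]

theorem twoLenBlk : ∀ (c j : ℕ), 2 * (blk j c).length = 2*c*j + c*(c+1) := by
  intro c
  induction c with
  | zero => intro j; simp [blk]
  | succ c ih =>
    intro j
    have h := ih (j+1)
    simp only [blk, List.length_append, List.length_cons, repA, List.length_replicate]
    nlinarith

theorem memLang (hg : ¬ IsOfFinOrder g) (w : List Bool) :
    w ∈ (mA g).language ↔ w ∉ Sl := by
  constructor
  · rintro ⟨k, acc⟩ ⟨c, rfl⟩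
    exact noAcceptSl hg c k acc
  · intro hw
    obtain ⟨k, i, acc, -, -⟩ := complete hg w hw
    exact ⟨k, acc⟩

theorem notReg (hg : ¬ IsOfFinOrder g) : ¬ (mA g).language.IsRegular := by
  rintro ⟨σ, xfin, D, hD⟩
  set K := Fintype.card σ with hK
  let D' : DFA Bool σ := ⟨D.step, D.start, D.acceptᶜ⟩
  have hSl : ∀ w, w ∈ D'.accepts ↔ w ∈ Sl := by
    intro w
    have h1 : w ∈ D'.accepts ↔ w ∉ D.accepts := Iff.rfl
    rw [h1, hD]
    constructor
    · intro h
      by_contra hns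
      exact h ((memLang hg w).2 hns)
    · intro h hmem
      exact ((memLang hg w).1 hmem) h
  have hwK : (true :: blk 1 K) ∈ D'.accepts := (hSl _).2 ⟨K, rfl⟩
  have h2K := twoLenBlk K 1
  have hlen : K ≤ (true :: blk 1 K).length := by
    simp only [List.length_cons]
    nlinarith
  obtain ⟨x, y, z, hxyz, hxy, hy, hpump⟩ := D'.pumping_lemma hwK hlen
  have hmem2 : x ++ (y ++ y) ++ z ∈ D'.accepts := by
    apply hpump
    refine Language.mem_mul.2 ⟨x ++ (y ++ y), Language.mem_mul.2
      ⟨x, Set.mem_singleton _, y ++ y, ?_, rfl⟩, z, Set.mem_singleton _, by simp⟩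
    refine Language.mem_kstar.2 ⟨[y, y], by simp, ?_⟩
    intro u hu
    have : u = y := by
      simp only [List.mem_cons, List.not_mem_nil, or_false] at hu
      tauto
    rw [this]
    exact Set.mem_singleton _
  obtain ⟨m, hm⟩ := (hSl _).1 hmem2
  have h2m := twoLenBlk m 1
  have l1 := congrArg List.length hxyz
  have l2 := congrArg List.length hm
  simp only [List.length_cons, List.length_append] at l1 l2
  have hylen : 1 ≤ y.length := by
    cases y with
    | nil => exact absurd rfl hy
    | cons a y' => simp
  rcases le_or_gt m K with h | h
  · nlinarith [Nat.mul_le_mul h h]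
  · have hm1 : K + 1 ≤ m := h
    nlinarith [Nat.mul_le_mul hm1 hm1]

end Machine
end EfaSqrt

/-- If a group `M` has an element of infinite order (equivalently, an infinite cyclic
subgroup), then there is an EFA over `M` accepting a non-regular language with group memory
complexity in `O(√n)`. -/
theorem efa_infinite_order_sqrt (M : Type) [Group M] (g : M) (hg : ¬ IsOfFinOrder g) :
    ∃ (V : Type) (_ : Fintype V) (A : EFA V M),
      ¬ A.language.IsRegular ∧ InO A.gmcFun Nat.sqrt := by
  refine ⟨Bool, inferInstance, EfaSqrt.mA g, EfaSqrt.notReg hg, 7, fun n => ?_⟩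
  have h := EfaSqrt.gmcFunLe hg n
  omega
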